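/- For every simple graph G on n vertices, the clique number satisfies ω(G) ≥ n/(n − \bar{\bar d}(G)), where \bar{\bar d}(G) is the quadratic mean of the degrees (Edwards' inequality). -/

import Mathlib

open Finset

/-- A δ-set in a graph: every vertex in the set has degree at most `n - |S|`. -/
def IsDeltaSet {V : Type*} [Fintype V] (G : SimpleGraph V) [DecidableRel G.Adj]
    (S : Finset V) : Prop :=
  ∀ v ∈ S, G.degree v ≤ Fintype.card V - S.card

/-- The generalized chromatic number: the least `r` such that the vertex set
partitions into `r` δ-sets. -/
noncomputable def genChrom {V : Type*} [Fintype V] [DecidableEq V]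
    (G : SimpleGraph V) [DecidableRel G.Adj] : ℕ :=
  sInf {r | ∃ f : V → Fin r, ∀ i, IsDeltaSet G (Finset.univ.filter fun v => f v = i)}

/-- Quadratic mean of the degree sequence. -/
noncomputable def qmDeg {V : Type*} [Fintype V] (G : SimpleGraph V) [DecidableRel G.Adj] : ℝ :=
  Real.sqrt ((∑ v, (G.degree v : ℝ) ^ 2) / Fintype.card V)

/-- `k`-th elementary symmetric polynomial of `x : Fin r → ℝ`. -/
def esym {r : ℕ} (k : ℕ) (x : Fin r → ℝ) : ℝ :=
  ∑ t ∈ Finset.univ.powersetCard k, ∏ i ∈ t, x i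


lemma delta_key {V : Type*} [Fintype V] [DecidableEq V] (G : SimpleGraph V)
    [DecidableRel G.Adj] :
    ∀ (m : ℕ) (T : Finset V), T.card ≤ m → ∀ (r : ℕ),
      (∀ C : Finset V, C ⊆ T → G.IsClique (C : Set V) → C.card ≤ r) →
      ∃ f : V → ℕ, (∀ v ∈ T, f v < r) ∧
        ∀ i : ℕ, ∀ u ∈ T.filter (fun v => f v = i),
          (T ∩ G.neighborFinset u).card + (T.filter (fun v => f v = i)).card ≤ T.card := by
  intro m
  induction m with
  | zero =>
    intro T hT r _
    have hTe : T = ∅ := Finset.card_eq_zero.mp (Nat.le_zero.mp hT)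
    subst hTe
    exact ⟨fun _ => 0, by simp, by simp⟩
  | succ m ih =>
    intro T hT r hr
    rcases T.eq_empty_or_nonempty with hTe | hne
    · subst hTe
      exact ⟨fun _ => 0, by simp, by simp⟩
    · obtain ⟨v, hvT, hvmax⟩ := T.exists_max_image (fun u => (T ∩ G.neighborFinset u).card) hne
      set T' := T ∩ G.neighborFinset v with hT'def
      have hT'sub : T' ⊆ T := inter_subset_left
      have hvnot : v ∉ T' := by
        simp [hT'def]
      have hcard' : T'.card ≤ m := by
        have hlt : T'.card < T.card :=
          card_lt_card ⟨hT'sub, fun hs => hvnot (hs hvT)⟩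
        omega
      have hr1 : 1 ≤ r := by
        have := hr {v} (by simpa using hvT) (by simpa using G.isClique_singleton v)
        simpa using this
      have hcl : ∀ C : Finset V, C ⊆ T' → G.IsClique (C : Set V) → C.card ≤ r - 1 := by
        intro C hC hCc
        have hvC : v ∉ C := fun h => hvnot (hC h)
        have hins : G.IsClique ((insert v C : Finset V) : Set V) := by
          rw [coe_insert, SimpleGraph.isClique_insert]
          refine ⟨hCc, fun b hb _ => ?_⟩
          have : b ∈ G.neighborFinset v := (mem_inter.mp (hC hb)).2
          exact (SimpleGraph.mem_neighborFinset _ _ _).mp this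
        have hsub : insert v C ⊆ T := insert_subset hvT (hC.trans hT'sub)
        have := hr (insert v C) hsub hins
        rw [card_insert_of_notMem hvC] at this
        omega
      obtain ⟨f', hf'lt, hf'⟩ := ih T' hcard' (r - 1) hcl
      refine ⟨fun u => if u ∈ T' then f' u else r - 1, ?_, ?_⟩
      · intro u _
        by_cases hu : u ∈ T'
        · have := hf'lt u hu
          simp only [hu, if_true]
          omega
        · simp only [hu, if_false]
          omega
      · intro i u hu
        by_cases hi : i = r - 1
        · subst hi
          have hfib : T.filter (fun u => (if u ∈ T' then f' u else r - 1) = r - 1)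
              = T \ T' := by
            ext w
            simp only [mem_filter, mem_sdiff]
            constructor
            · rintro ⟨hwT, hw⟩
              refine ⟨hwT, fun hw' => ?_⟩
              have := hf'lt w hw'
              simp only [hw', if_true] at hw
              omega
            · rintro ⟨hwT, hw'⟩
              simp [hwT, hw']
          rw [hfib] at hu ⊢
          have hcs : (T \ T').card = T.card - T'.card := card_sdiff_of_subset hT'sub
          have hdu : (T ∩ G.neighborFinset u).card ≤ T'.card :=
            hvmax u (mem_sdiff.mp hu).1
          have := card_le_card hT'sub
          omega
        · have hfib : T.filter (fun u => (if u ∈ T' then f' u else r - 1) = i)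
              = T'.filter (fun v => f' v = i) := by
            ext w
            simp only [mem_filter]
            constructor
            · rintro ⟨hwT, hw⟩
              by_cases hw' : w ∈ T'
              · simp only [hw', if_true] at hw; exact ⟨hw', hw⟩
              · simp only [hw', if_false] at hw; exact absurd hw.symm hi
            · rintro ⟨hwT', hw⟩
              exact ⟨hT'sub hwT', by simp [hwT', hw]⟩
          rw [hfib] at hu ⊢
          have h1 := hf' i u hu
          have hsubN : T ∩ G.neighborFinset u ⊆ (T' ∩ G.neighborFinset u) ∪ (T \ T') := by
            intro x hx
            rcases mem_inter.mp hx with ⟨hxT, hxN⟩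
            by_cases hx' : x ∈ T'
            · exact mem_union_left _ (mem_inter.mpr ⟨hx', hxN⟩)
            · exact mem_union_right _ (mem_sdiff.mpr ⟨hxT, hx'⟩)
          have h2 : (T ∩ G.neighborFinset u).card
              ≤ (T' ∩ G.neighborFinset u).card + (T \ T').card :=
            (card_le_card hsubN).trans (card_union_le _ _)
          have hcs : (T \ T').card = T.card - T'.card := card_sdiff_of_subset hT'sub
          have := card_le_card hT'sub
          omega

theorem stmt10 {V : Type*} [Fintype V] (G : SimpleGraph V) [DecidableRel G.Adj]
    (hn : 0 < Fintype.card V) :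
    (G.cliqueNum : ℝ) ≥ (Fintype.card V : ℝ) / ((Fintype.card V : ℝ) - qmDeg G) := by
  classical
  obtain ⟨v0⟩ : Nonempty V := Fintype.card_pos_iff.mp hn
  have hr1 : 1 ≤ G.cliqueNum := by
    have h := SimpleGraph.IsClique.card_le_cliqueNum (G := G) (t := {v0})
      (tc := by simpa using G.isClique_singleton v0)
    simpa using h
  obtain ⟨f, hflt, hdelta⟩ := delta_key G (Fintype.card V) univ (by simp) G.cliqueNum
      (fun C _ hC => SimpleGraph.IsClique.card_le_cliqueNum (tc := hC))
  set r := G.cliqueNum with hrdef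
  set P : ℕ → Finset V := fun i => univ.filter (fun v => f v = i) with hPdef
  have hdelta' : ∀ i : ℕ, ∀ u ∈ P i, G.degree u + (P i).card ≤ Fintype.card V := by
    intro i u hu
    have h := hdelta i u hu
    rwa [univ_inter, SimpleGraph.card_neighborFinset_eq_degree, card_univ] at h
  set N : ℝ := (Fintype.card V : ℝ) with hNdef
  set R : ℝ := (r : ℝ) with hRdef
  have hNpos : (0:ℝ) < N := by rw [hNdef]; exact_mod_cast hn
  have hRpos : (0:ℝ) < R := by
    rw [hRdef]; exact_mod_cast hr1
  have hR1 : (1:ℝ) ≤ R := by rw [hRdef]; exact_mod_cast hr1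
  have hfib : ∀ g : V → ℝ, ∑ i ∈ Finset.range r, ∑ v ∈ P i, g v = ∑ v, g v := fun g =>
    Finset.sum_fiberwise_of_maps_to (fun v _ => Finset.mem_range.mpr (hflt v (mem_univ v))) g
  have hsum1 : ∑ i ∈ Finset.range r, ((P i).card : ℝ) = N := by
    have h := hfib (fun _ => (1:ℝ))
    simpa using h
  have hcardle : ∀ i : ℕ, ((P i).card : ℝ) ≤ N := by
    intro i
    rw [hNdef]
    exact_mod_cast card_le_univ (P i)
  have hmain : R^2 * ∑ v, (G.degree v : ℝ)^2 ≤ N^3 * (R - 1)^2 := by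
    rcases eq_or_lt_of_le hr1 with h1 | h2
    on_goal 1 => have hr1' : r = 1 := h1.symm
    · -- r = 1
      have hP0 : P 0 = univ := by
        ext w
        simp only [hPdef, mem_filter, mem_univ, true_and, iff_true]
        have h := hflt w (mem_univ w)
        omega
      have hdeg0 : ∀ v : V, G.degree v = 0 := by
        intro v
        have h := hdelta' 0 v (by rw [hP0]; exact mem_univ v)
        rw [hP0, card_univ] at h
        omega
      have hz : ∑ v, (G.degree v : ℝ)^2 = 0 := by
        apply Finset.sum_eq_zero
        intro v _
        simp [hdeg0 v]
      have hR1' : R = 1 := by rw [hRdef, ← h1]; norm_num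
      rw [hz, hR1']
      norm_num
    · -- r ≥ 2
      have hR2 : (2:ℝ) ≤ R := by rw [hRdef]; exact_mod_cast h2
      have hfb : ∀ i ∈ Finset.range r,
          ∑ v ∈ P i, (G.degree v : ℝ)^2 ≤ ((P i).card : ℝ) * (N - (P i).card)^2 := by
        intro i _
        have hb : ∀ v ∈ P i, (G.degree v : ℝ)^2 ≤ (N - (P i).card)^2 := by
          intro v hv
          have h := hdelta' i v hv
          have hd : (G.degree v : ℝ) ≤ N - (P i).card := by
            rw [hNdef]
            have : (G.degree v : ℝ) + ((P i).card : ℝ) ≤ (Fintype.card V : ℝ) := by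
              exact_mod_cast h
            linarith
          exact pow_le_pow_left₀ (by positivity) hd 2
        calc ∑ v ∈ P i, (G.degree v : ℝ)^2 ≤ (P i).card • (N - (P i).card)^2 :=
              Finset.sum_le_card_nsmul _ _ _ hb
          _ = ((P i).card : ℝ) * (N - (P i).card)^2 := by rw [nsmul_eq_mul]
      have htan : ∀ i ∈ Finset.range r,
          R^3 * (((P i).card : ℝ) * (N - (P i).card)^2)
            ≤ (N^2*R^3 - 4*N^2*R^2 + 3*N^2*R) * ((P i).card : ℝ) + (2*N^3*R - 2*N^3) := by
        intro i _
        set x : ℝ := ((P i).card : ℝ) with hx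
        have hx0 : 0 ≤ x := by positivity
        have hxN : x ≤ N := hcardle i
        have hkey : 0 ≤ 2*N*R - 2*N - R*x := by nlinarith
        nlinarith [mul_nonneg (sq_nonneg (R*x - N)) hkey]
      have hstep1 : ∑ v, (G.degree v : ℝ)^2
          ≤ ∑ i ∈ Finset.range r, ((P i).card : ℝ) * (N - (P i).card)^2 := by
        rw [← hfib (fun v => (G.degree v : ℝ)^2)]
        exact Finset.sum_le_sum hfb
      have hstep2 : R^3 * ∑ i ∈ Finset.range r, ((P i).card : ℝ) * (N - (P i).card)^2
          ≤ N^3 * R * (R - 1)^2 := by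
        rw [Finset.mul_sum]
        calc ∑ i ∈ Finset.range r, R^3 * (((P i).card : ℝ) * (N - (P i).card)^2)
            ≤ ∑ i ∈ Finset.range r,
              ((N^2*R^3 - 4*N^2*R^2 + 3*N^2*R) * ((P i).card : ℝ) + (2*N^3*R - 2*N^3)) :=
              Finset.sum_le_sum htan
          _ = (N^2*R^3 - 4*N^2*R^2 + 3*N^2*R) * N + R * (2*N^3*R - 2*N^3) := by
              rw [Finset.sum_add_distrib, ← Finset.mul_sum, hsum1, Finset.sum_const,
                Finset.card_range, nsmul_eq_mul, hRdef]
          _ = N^3 * R * (R - 1)^2 := by ring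
      have hstep3 : R^3 * ∑ v, (G.degree v : ℝ)^2 ≤ N^3 * R * (R - 1)^2 := by
        calc R^3 * ∑ v, (G.degree v : ℝ)^2
            ≤ R^3 * ∑ i ∈ Finset.range r, ((P i).card : ℝ) * (N - (P i).card)^2 := by
              apply mul_le_mul_of_nonneg_left hstep1 (by positivity)
          _ ≤ N^3 * R * (R - 1)^2 := hstep2
      have := le_of_mul_le_mul_left (by nlinarith : R * (R^2 * ∑ v, (G.degree v : ℝ)^2) ≤ R * (N^3 * (R - 1)^2)) hRpos
      linarith
  -- from hmain to qmDeg bound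
  have hsq : (∑ v, (G.degree v : ℝ)^2) / N ≤ (N * (R - 1) / R)^2 := by
    rw [div_le_iff₀ hNpos]
    have h2 : (N * (R - 1) / R)^2 * N = N^3 * (R - 1)^2 / R^2 := by
      field_simp
    rw [h2, le_div_iff₀ (by positivity : (0:ℝ) < R^2)]
    nlinarith [hmain]
  have hq0 : 0 ≤ N * (R - 1) / R := by
    apply div_nonneg _ (le_of_lt hRpos)
    nlinarith
  have hql : qmDeg G ≤ N * (R - 1) / R := by
    rw [qmDeg, ← hNdef]
    calc Real.sqrt ((∑ v, (G.degree v : ℝ)^2) / N) ≤ Real.sqrt ((N * (R - 1) / R)^2) :=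
          Real.sqrt_le_sqrt hsq
      _ = N * (R - 1) / R := Real.sqrt_sq hq0
  have hNR : N - N * (R - 1) / R = N / R := by
    field_simp
    ring
  have hpos : 0 < N - qmDeg G := by
    have h1 : N / R ≤ N - qmDeg G := by
      rw [← hNR]; linarith
    have : (0:ℝ) < N / R := by positivity
    linarith
  rw [ge_iff_le, div_le_iff₀ hpos]
  have h1 : N / R ≤ N - qmDeg G := by
    rw [← hNR]; linarith
  have h2 : R * (N / R) ≤ R * (N - qmDeg G) := mul_le_mul_of_nonneg_left h1 (le_of_lt hRpos)
  have h3 : R * (N / R) = N := by field_simp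
  rw [← hNdef, hRdef] at *
  linarith [h2, h3]
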